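/- Let M be an anti-Yetter-Drinfeld module over H. Then the map ς : M → M, ς(m) = m₍₁₎·m₍₀₎, is H-linear (ς(h·m) = h·ς(m)) and H-colinear (ρ(ς(m)) = ς(m₍₀₎) ⊗ m₍₁₎); that is, ς is a morphism of anti-Yetter-Drinfeld modules. Moreover, on the anti-Yetter-Drinfeld module H ⊗ T associated to a right H-comodule T (with action x·(y⊗t) = xy ⊗ t and coaction δ(y⊗t) = y⁽²⁾ ⊗ t₍₀₎ ⊗ y⁽³⁾ t₍₁₎ S(y⁽¹⁾)), one has ς(x⊗t) = x t₍₁₎ ⊗ t₍₀₎. -/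

import Mathlib

/-!
# Statement 17

`k` a field, `H` a Hopf algebra over `k`, `M` an anti-Yetter-Drinfeld module over `H` (a left
`H`-module and right `H`-comodule with `ρ(h·m) = h⁽²⁾·m₍₀₎ ⊗ h⁽³⁾ m₍₁₎ S(h⁽¹⁾)`).  The map
`ς : M → M`, `ς(m) = m₍₁₎ · m₍₀₎`, is `H`-linear and `H`-colinear, i.e. a morphism of
anti-Yetter-Drinfeld modules.  Moreover, on the anti-Yetter-Drinfeld module `H ⊗ T` associated
to a right `H`-comodule `T` (action `x·(y⊗t) = xy⊗t`, coaction
`δ(y⊗t) = y⁽²⁾ ⊗ t₍₀₎ ⊗ y⁽³⁾ t₍₁₎ S(y⁽¹⁾)`), one has `ς(x ⊗ t) = x t₍₁₎ ⊗ t₍₀₎`.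
-/

open TensorProduct

noncomputable section

variable (k : Type) [Field k]

/-- The curried action of a `k`-algebra `R` on a module `V`, as a `k`-bilinear map. -/
def csmul (R : Type) [Ring R] [Algebra k R] (V : Type) [AddCommGroup V] [Module k V]
    [Module R V] [IsScalarTower k R V] [SMulCommClass k R V] : R →ₗ[k] V →ₗ[k] V where
  toFun r :=
    { toFun := fun v => r • v
      map_add' := smul_add r
      map_smul' := fun c v => (smul_comm c r v).symm }
  map_add' r r' := LinearMap.ext fun v => add_smul r r' v
  map_smul' c r := LinearMap.ext fun v => smul_assoc c r v

variable (H : Type) [Ring H] [HopfAlgebra k H]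

/-- The coaction `δ(x ⊗ t) = (x⁽²⁾ ⊗ t₍₀₎) ⊗ x⁽³⁾ t₍₁₎ S(x⁽¹⁾)` on `H ⊗ T`, for any
right `H`-comodule `(T, ρT)`. -/
def coact (T : Type) [AddCommGroup T] [Module k T] (ρT : T →ₗ[k] T ⊗[k] H) :
    H ⊗[k] T →ₗ[k] (H ⊗[k] T) ⊗[k] H :=
  (LinearMap.lTensor (H ⊗[k] T)
      ((LinearMap.mul' k H) ∘ₗ (LinearMap.lTensor H (LinearMap.mul' k H)))) ∘ₗ
    (TensorProduct.assoc k H T (H ⊗[k] (H ⊗[k] H))).symm.toLinearMap ∘ₗ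
    (LinearMap.lTensor H (TensorProduct.leftComm k H T (H ⊗[k] H)).toLinearMap) ∘ₗ
    (LinearMap.lTensor H (LinearMap.lTensor H
      (LinearMap.lTensor T (TensorProduct.comm k H H).toLinearMap))) ∘ₗ
    (LinearMap.lTensor H (LinearMap.lTensor H
      (TensorProduct.leftComm k H T H).toLinearMap)) ∘ₗ
    (LinearMap.lTensor H (TensorProduct.leftComm k H H (T ⊗[k] H)).toLinearMap) ∘ₗ
    (TensorProduct.assoc k H H (H ⊗[k] (T ⊗[k] H))).toLinearMap ∘ₗ
    (LinearMap.rTensor (H ⊗[k] (T ⊗[k] H)) (TensorProduct.comm k H H).toLinearMap) ∘ₗ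
    (TensorProduct.assoc k (H ⊗[k] H) H (T ⊗[k] H)).toLinearMap ∘ₗ
    (LinearMap.rTensor (T ⊗[k] H) (TensorProduct.assoc k H H H).symm.toLinearMap) ∘ₗ
    (LinearMap.rTensor (T ⊗[k] H)
      (LinearMap.rTensor (H ⊗[k] H) (HopfAlgebra.antipode (R := k)))) ∘ₗ
    (LinearMap.rTensor (T ⊗[k] H)
      ((LinearMap.lTensor H (Coalgebra.comul (R := k))) ∘ₗ (Coalgebra.comul (R := k)))) ∘ₗ
    (LinearMap.lTensor H ρT)

/-- The multiplication map `H ⊗ (H ⊗ T) → H ⊗ T`, `x ⊗ (y ⊗ t) ↦ x y ⊗ t`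
(the `H`-action on `H ⊗ T`). -/
def actHT (T : Type) [AddCommGroup T] [Module k T] :
    H ⊗[k] (H ⊗[k] T) →ₗ[k] H ⊗[k] T :=
  (LinearMap.rTensor T (LinearMap.mul' k H)) ∘ₗ
    (TensorProduct.assoc k H H T).symm.toLinearMap

variable (M : Type) [AddCommGroup M] [Module k M] [Module H M]
  [IsScalarTower k H M] [SMulCommClass k H M]

/-- `ς : M →ₗ M`, `ς(m) = m₍₁₎ • m₍₀₎`. -/
def sigmaM (ρM : M →ₗ[k] M ⊗[k] H) : M →ₗ[k] M :=
  (TensorProduct.lift (csmul k H M)) ∘ₗ (TensorProduct.comm k M H).toLinearMap ∘ₗ ρM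

open Coalgebra HopfAlgebra LinearMap in
/-- The "tail" of `coact`: everything except the initial `lTensor H ρT`. -/
def tailCoact (T : Type) [AddCommGroup T] [Module k T] :
    H ⊗[k] (T ⊗[k] H) →ₗ[k] (H ⊗[k] T) ⊗[k] H :=
  (LinearMap.lTensor (H ⊗[k] T)
      ((LinearMap.mul' k H) ∘ₗ (LinearMap.lTensor H (LinearMap.mul' k H)))) ∘ₗ
    (TensorProduct.assoc k H T (H ⊗[k] (H ⊗[k] H))).symm.toLinearMap ∘ₗ
    (LinearMap.lTensor H (TensorProduct.leftComm k H T (H ⊗[k] H)).toLinearMap) ∘ₗ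
    (LinearMap.lTensor H (LinearMap.lTensor H
      (LinearMap.lTensor T (TensorProduct.comm k H H).toLinearMap))) ∘ₗ
    (LinearMap.lTensor H (LinearMap.lTensor H
      (TensorProduct.leftComm k H T H).toLinearMap)) ∘ₗ
    (LinearMap.lTensor H (TensorProduct.leftComm k H H (T ⊗[k] H)).toLinearMap) ∘ₗ
    (TensorProduct.assoc k H H (H ⊗[k] (T ⊗[k] H))).toLinearMap ∘ₗ
    (LinearMap.rTensor (H ⊗[k] (T ⊗[k] H)) (TensorProduct.comm k H H).toLinearMap) ∘ₗ
    (TensorProduct.assoc k (H ⊗[k] H) H (T ⊗[k] H)).toLinearMap ∘ₗ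
    (LinearMap.rTensor (T ⊗[k] H) (TensorProduct.assoc k H H H).symm.toLinearMap) ∘ₗ
    (LinearMap.rTensor (T ⊗[k] H)
      (LinearMap.rTensor (H ⊗[k] H) (HopfAlgebra.antipode (R := k)))) ∘ₗ
    (LinearMap.rTensor (T ⊗[k] H)
      ((LinearMap.lTensor H (Coalgebra.comul (R := k))) ∘ₗ (Coalgebra.comul (R := k))))

lemma coact_eq_tail (T : Type) [AddCommGroup T] [Module k T] (ρT : T →ₗ[k] T ⊗[k] H) :
    coact k H T ρT = tailCoact k H T ∘ₗ LinearMap.lTensor H ρT := rfl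

open Coalgebra HopfAlgebra in
/-- Evaluation of `tailCoact` on a pure tensor, in terms of arbitrary representations of
the iterated comultiplication. -/
lemma tail_tmul (T : Type) [AddCommGroup T] [Module k T] (x : H) (w : T) (h : H)
    (r : Coalgebra.Repr k x (H × H)) (u : ∀ i : r.ι, Coalgebra.Repr k (r.right i) (H × H)) :
    tailCoact k H T (x ⊗ₜ[k] (w ⊗ₜ[k] h)) =
      ∑ i ∈ r.index, ∑ j ∈ (u i).index,
        (((u i).left j ⊗ₜ[k] w) ⊗ₜ[k]
          ((u i).right j * (h * HopfAlgebra.antipode (R := k) (r.left i)))) := by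
  have hx : (LinearMap.lTensor H (Coalgebra.comul (R := k))) (Coalgebra.comul (R := k) x)
      = ∑ i ∈ r.index, ∑ j ∈ (u i).index,
        r.left i ⊗ₜ[k] ((u i).left j ⊗ₜ[k] (u i).right j) := by
    rw [← r.eq, map_sum]
    exact Finset.sum_congr rfl fun i _ => by
      rw [LinearMap.lTensor_tmul, ← (u i).eq, TensorProduct.tmul_sum]
  simp only [tailCoact, LinearMap.comp_apply, LinearMap.rTensor_tmul]
  rw [hx]
  simp [TensorProduct.sum_tmul, TensorProduct.tmul_sum, map_sum]
/-- Constructor for trilinear maps out of `H ⊗ (H ⊗ H)`. -/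
def mk3 {V : Type} [AddCommGroup V] [Module k V] (f : H → H → H → V)
    (h1 : ∀ a a' b c, f (a + a') b c = f a b c + f a' b c)
    (h2 : ∀ (r : k) (a b c : H), f (r • a) b c = r • f a b c)
    (h3 : ∀ a b b' c, f a (b + b') c = f a b c + f a b' c)
    (h4 : ∀ (r : k) (a b c : H), f a (r • b) c = r • f a b c)
    (h5 : ∀ a b c c', f a b (c + c') = f a b c + f a b c')
    (h6 : ∀ (r : k) (a b c : H), f a b (r • c) = r • f a b c) :
    H ⊗[k] (H ⊗[k] H) →ₗ[k] V :=
  TensorProduct.lift ((TensorProduct.lift.equiv (RingHom.id k) H H V).toLinearMap ∘ₗ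
    (LinearMap.mk₂ k (fun a b => LinearMap.mk ⟨f a b, h5 a b⟩ (fun r c => h6 r a b c))
      (fun a a' b => LinearMap.ext fun c => h1 a a' b c)
      (fun r a b => LinearMap.ext fun c => h2 r a b c)
      (fun a b b' => LinearMap.ext fun c => h3 a b b' c)
      (fun r a b => LinearMap.ext fun c => by
        rw [LinearMap.smul_apply]; exact h4 r a b c)))

@[simp] lemma mk3_tmul {V : Type} [AddCommGroup V] [Module k V] (f : H → H → H → V)
    (h1 h2 h3 h4 h5 h6) (a b c : H) :
    mk3 k H f h1 h2 h3 h4 h5 h6 (a ⊗ₜ[k] (b ⊗ₜ[k] c)) = f a b c := by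
  simp [mk3]

open Coalgebra in
lemma counit_smul (a : H) (r : Coalgebra.Repr k a (H × H)) :
    ∑ i ∈ r.index, Coalgebra.counit (R := k) (r.left i) • r.right i = a := by
  have h := Coalgebra.sum_counit_tmul_eq r
  apply_fun (TensorProduct.lid k H) at h
  rw [map_sum] at h
  simp only [TensorProduct.lid_tmul, one_smul] at h
  exact h

lemma lift_csmul_tmul (h : H) (m : M) :
    TensorProduct.lift (csmul k H M) (h ⊗ₜ[k] m) = h • m := by
  simp [csmul]

open Coalgebra HopfAlgebra in
/-- Key Hopf identity: `∑ x⁽³⁾ (g S(x⁽¹⁾)) x⁽²⁾ = x g`. -/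
lemma keyA (x g : H) (r : Coalgebra.Repr k x (H × H)) (u : ∀ i : r.ι, Coalgebra.Repr k (r.right i) (H × H)) :
    ∑ i ∈ r.index, ∑ j ∈ (u i).index,
      ((u i).right j * (g * antipode (R := k) (r.left i))) * (u i).left j = x * g := by
  classical
  set a₁ : (i : r.ι) → Coalgebra.Repr k (r.left i) (H × H) := fun i => ℛ k (r.left i) with ha₁
  have h0 := Coalgebra.sum_tmul_tmul_eq r a₁ u
  have h1 := congrArg (mk3 k H (fun a b c => (c * (g * antipode (R := k) a)) * b)
    (by intros; simp [map_add, mul_add, add_mul])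
    (by intros; simp [map_smul, mul_smul_comm, smul_mul_assoc])
    (by intros; simp [mul_add, add_mul])
    (by intros; simp [mul_smul_comm, smul_mul_assoc])
    (by intros; simp [mul_add, add_mul])
    (by intros; simp [mul_smul_comm, smul_mul_assoc])) h0
  simp only [map_sum, mk3_tmul] at h1
  -- h1 : ∑ i, ∑ j, (r.right i * (g * S ((a₁ i).left j))) * (a₁ i).right j
  --    = ∑ i, ∑ j, ((u i).right j * (g * S (r.left i))) * (u i).left j
  rw [← h1]
  have h2 : ∀ i ∈ r.index,
      ∑ j ∈ (a₁ i).index, (r.right i * (g * antipode (R := k) ((a₁ i).left j))) * (a₁ i).right j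
        = Coalgebra.counit (R := k) (r.left i) • (r.right i * g) := by
    intro i _
    have h3 : ∀ j, (r.right i * (g * antipode (R := k) ((a₁ i).left j))) * (a₁ i).right j
        = r.right i * (g * (antipode (R := k) ((a₁ i).left j) * (a₁ i).right j)) := by
      intro j; rw [mul_assoc, mul_assoc]
    rw [Finset.sum_congr rfl fun j _ => h3 j, ← Finset.mul_sum, ← Finset.mul_sum,
      HopfAlgebra.sum_antipode_mul_eq_algebraMap_counit (a₁ i), ← Algebra.commutes, ← Algebra.smul_def,
      mul_smul_comm]
  rw [Finset.sum_congr rfl h2]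
  simp only [← smul_mul_assoc]
  rw [← Finset.sum_mul, counit_smul k H x r]
open Coalgebra HopfAlgebra in
lemma coact_tmul (T : Type) [AddCommGroup T] [Module k T] (ρT : T →ₗ[k] T ⊗[k] H)
    (x : H) (t : T) (F : Finset (T × H)) (hF : ρT t = ∑ s ∈ F, s.1 ⊗ₜ[k] s.2)
    (r : Coalgebra.Repr k x (H × H)) (u : ∀ i : r.ι, Coalgebra.Repr k (r.right i) (H × H)) :
    coact k H T ρT (x ⊗ₜ[k] t) =
      ∑ s ∈ F, ∑ i ∈ r.index, ∑ j ∈ (u i).index,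
        (((u i).left j ⊗ₜ[k] s.1) ⊗ₜ[k]
          ((u i).right j * (s.2 * antipode (R := k) (r.left i)))) := by
  rw [coact_eq_tail, LinearMap.comp_apply, LinearMap.lTensor_tmul, hF,
    TensorProduct.tmul_sum, map_sum]
  exact Finset.sum_congr rfl fun s _ => tail_tmul k H T x s.1 s.2 r u

lemma sigmaM_eq (ρM : M →ₗ[k] M ⊗[k] H) (m : M) (G : Finset (M × H))
    (hG : ρM m = ∑ s ∈ G, s.1 ⊗ₜ[k] s.2) :
    sigmaM k H M ρM m = ∑ s ∈ G, s.2 • s.1 := by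
  simp [sigmaM, hG, map_sum, csmul]

open Coalgebra HopfAlgebra in
lemma part1 (ρM : M →ₗ[k] M ⊗[k] H)
    (haYD : ρM ∘ₗ TensorProduct.lift (csmul k H M) =
      (LinearMap.rTensor H (TensorProduct.lift (csmul k H M))) ∘ₗ coact k H M ρM)
    (h : H) (m : M) : sigmaM k H M ρM (h • m) = h • sigmaM k H M ρM m := by
  classical
  obtain ⟨F, hF⟩ := TensorProduct.exists_finset (ρM m)
  set r := ℛ k h with hr
  set u : (i : r.ι) → Coalgebra.Repr k (r.right i) (H × H) := fun i => ℛ k (r.right i) with hu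
  have hρ : ρM (h • m) = ∑ s ∈ F, ∑ i ∈ r.index, ∑ j ∈ (u i).index,
      (((u i).left j • s.1) ⊗ₜ[k]
        ((u i).right j * (s.2 * antipode (R := k) (r.left i)))) := by
    have h0 := LinearMap.congr_fun haYD (h ⊗ₜ[k] m)
    rw [LinearMap.comp_apply, LinearMap.comp_apply, lift_csmul_tmul] at h0
    rw [h0, coact_tmul k H M ρM h m F hF r u]
    simp [map_sum, csmul]
  have hL : sigmaM k H M ρM (h • m) = ∑ s ∈ F, ∑ i ∈ r.index, ∑ j ∈ (u i).index,
      (((u i).right j * (s.2 * antipode (R := k) (r.left i))) * (u i).left j) • s.1 := by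
    simp [sigmaM, hρ, map_sum, csmul, smul_smul]
  rw [hL, sigmaM_eq k H M ρM m F hF, Finset.smul_sum]
  refine Finset.sum_congr rfl fun s _ => ?_
  rw [smul_smul, ← keyA k H h s.2 r u]
  rw [Finset.sum_smul]
  exact Finset.sum_congr rfl fun i _ => (Finset.sum_smul).symm

open Coalgebra HopfAlgebra in
lemma part3 (T : Type) [AddCommGroup T] [Module k T] (ρT : T →ₗ[k] T ⊗[k] H) :
    actHT k H T ∘ₗ (TensorProduct.comm k (H ⊗[k] T) H).toLinearMap ∘ₗ coact k H T ρT =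
      (LinearMap.rTensor T (LinearMap.mul' k H)) ∘ₗ
        (TensorProduct.assoc k H H T).symm.toLinearMap ∘ₗ
        (LinearMap.lTensor H (TensorProduct.comm k T H).toLinearMap) ∘ₗ
        (LinearMap.lTensor H ρT) := by
  classical
  apply TensorProduct.ext'
  intro x t
  obtain ⟨F, hF⟩ := TensorProduct.exists_finset (ρT t)
  set r := ℛ k x with hr
  set u : (i : r.ι) → Coalgebra.Repr k (r.right i) (H × H) := fun i => ℛ k (r.right i) with hu
  have hL : (actHT k H T ∘ₗ (TensorProduct.comm k (H ⊗[k] T) H).toLinearMap ∘ₗ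
      coact k H T ρT) (x ⊗ₜ[k] t)
      = ∑ s ∈ F, ∑ i ∈ r.index, ∑ j ∈ (u i).index,
        ((((u i).right j * (s.2 * antipode (R := k) (r.left i))) * (u i).left j) ⊗ₜ[k] s.1) := by
    rw [LinearMap.comp_apply, LinearMap.comp_apply, coact_tmul k H T ρT x t F hF r u]
    simp [actHT, map_sum]
  rw [hL]
  have hR : ((LinearMap.rTensor T (LinearMap.mul' k H)) ∘ₗ
      (TensorProduct.assoc k H H T).symm.toLinearMap ∘ₗ
      (LinearMap.lTensor H (TensorProduct.comm k T H).toLinearMap) ∘ₗ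
      (LinearMap.lTensor H ρT)) (x ⊗ₜ[k] t) = ∑ s ∈ F, (x * s.2) ⊗ₜ[k] s.1 := by
    simp [hF, TensorProduct.tmul_sum, map_sum]
  rw [hR]
  refine Finset.sum_congr rfl fun s _ => ?_
  rw [← keyA k H x s.2 r u, TensorProduct.sum_tmul]
  exact Finset.sum_congr rfl fun i _ => by rw [TensorProduct.sum_tmul]
open Coalgebra HopfAlgebra in
/-- The gadget map `a ⊗ (b ⊗ c) ↦ ∑ b⁽²⁾ • m₀ ⊗ c (a S(b⁽¹⁾))`. -/
def xiHat (m₀ : M) : H ⊗[k] (H ⊗[k] H) →ₗ[k] M ⊗[k] H :=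
  (TensorProduct.map ((csmul k H M).flip m₀) LinearMap.id) ∘ₗ
  (LinearMap.lTensor H (LinearMap.mul' k H)) ∘ₗ
  (LinearMap.lTensor H (TensorProduct.comm k H H).toLinearMap) ∘ₗ
  (TensorProduct.leftComm k H H H).toLinearMap ∘ₗ
  (LinearMap.rTensor (H ⊗[k] H) (LinearMap.mul' k H)) ∘ₗ
  (TensorProduct.assoc k H H (H ⊗[k] H)).symm.toLinearMap ∘ₗ
  (LinearMap.lTensor H (TensorProduct.assoc k H H H).toLinearMap) ∘ₗ
  (LinearMap.lTensor H
    (LinearMap.rTensor H (LinearMap.rTensor H (HopfAlgebra.antipode (R := k))))) ∘ₗ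
  (LinearMap.lTensor H (LinearMap.rTensor H (Coalgebra.comul (R := k))))

open Coalgebra HopfAlgebra in
lemma xiHat_tmul (m₀ : M) (a b c : H) (w : Coalgebra.Repr k b (H × H)) :
    xiHat k H M m₀ (a ⊗ₜ[k] (b ⊗ₜ[k] c)) =
      ∑ q ∈ w.index, (w.right q • m₀) ⊗ₜ[k] (c * (a * antipode (R := k) (w.left q))) := by
  have hb : (LinearMap.rTensor H (Coalgebra.comul (R := k))) (b ⊗ₜ[k] c)
      = ∑ q ∈ w.index, (w.left q ⊗ₜ[k] w.right q) ⊗ₜ[k] c := by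
    rw [LinearMap.rTensor_tmul, ← w.eq, TensorProduct.sum_tmul]
  simp only [xiHat, LinearMap.comp_apply, LinearMap.lTensor_tmul]
  rw [hb]
  simp [TensorProduct.tmul_sum, map_sum, csmul]

open Coalgebra HopfAlgebra in
/-- Core computation for colinearity. -/
lemma p2core (m₀ : M) (x : H) (r : Coalgebra.Repr k x (H × H)) :
    ∑ i ∈ r.index, (LinearMap.rTensor H (TensorProduct.lift (csmul k H M)))
        (tailCoact k H M (r.right i ⊗ₜ[k] (m₀ ⊗ₜ[k] r.left i)))
      = ∑ i ∈ r.index, (r.left i • m₀) ⊗ₜ[k] r.right i := by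
  classical
  set s : (i : r.ι) → Coalgebra.Repr k (r.right i) (H × H) := fun i => ℛ k (r.right i) with hs
  set v : (i : r.ι) → (p : (s i).ι) → Coalgebra.Repr k ((s i).right p) (H × H) :=
    fun i p => ℛ k ((s i).right p) with hv
  set w : (i : r.ι) → (p : (s i).ι) → Coalgebra.Repr k ((s i).left p) (H × H) :=
    fun i p => ℛ k ((s i).left p) with hw
  set A : (i : r.ι) → Coalgebra.Repr k (r.left i) (H × H) := fun i => ℛ k (r.left i) with hA
  set B : (i : r.ι) → (j : (A i).ι) → Coalgebra.Repr k ((A i).right j) (H × H) :=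
    fun i j => ℛ k ((A i).right j) with hB
  set D : (i : r.ι) → (j : (A i).ι) → Coalgebra.Repr k ((A i).left j) (H × H) :=
    fun i j => ℛ k ((A i).left j) with hD
  -- Step 1: evaluate the left-hand side
  have step1 : ∑ i ∈ r.index, (LinearMap.rTensor H (TensorProduct.lift (csmul k H M)))
        (tailCoact k H M (r.right i ⊗ₜ[k] (m₀ ⊗ₜ[k] r.left i)))
      = ∑ i ∈ r.index, ∑ p ∈ (s i).index, ∑ q ∈ (v i p).index,
        ((v i p).left q • m₀) ⊗ₜ[k]
          ((v i p).right q * (r.left i * antipode (R := k) ((s i).left p))) := by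
    refine Finset.sum_congr rfl fun i _ => ?_
    rw [tail_tmul k H M (r.right i) m₀ (r.left i) (s i) (v i)]
    simp [map_sum, csmul]
  -- Step 2 (per i coassociativity move)
  have step2 : ∀ i : r.ι, ∑ p ∈ (s i).index, ∑ q ∈ (v i p).index,
        ((v i p).left q • m₀) ⊗ₜ[k]
          ((v i p).right q * (r.left i * antipode (R := k) ((s i).left p)))
      = ∑ p ∈ (s i).index, ∑ q ∈ (w i p).index,
        ((w i p).right q • m₀) ⊗ₜ[k]
          ((s i).right p * (r.left i * antipode (R := k) ((w i p).left q))) := by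
    intro i
    have h0 := Coalgebra.sum_tmul_tmul_eq (s i) (w i) (v i)
    have h1 := congrArg (mk3 k H
        (fun a b c => (b • m₀) ⊗ₜ[k] (c * (r.left i * antipode (R := k) a)))
      (by intros; simp [map_add, mul_add, TensorProduct.tmul_add])
      (by intros; simp [map_smul, mul_smul_comm, TensorProduct.tmul_smul])
      (by intros; simp [TensorProduct.add_tmul, add_smul])
      (by intros; simp [TensorProduct.smul_tmul', smul_assoc])
      (by intros; simp [add_mul, TensorProduct.tmul_add])
      (by intros; simp [smul_mul_assoc, TensorProduct.tmul_smul])) h0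
    simp only [map_sum, mk3_tmul] at h1
    exact h1.symm
  -- Step 3 (global coassociativity move, via `xiHat`)
  have h0 := Coalgebra.sum_tmul_tmul_eq r A s
  have h1 := congrArg (xiHat k H M m₀) h0
  rw [map_sum, map_sum] at h1
  have h1L : ∑ i ∈ r.index, (xiHat k H M m₀)
        (∑ j ∈ (A i).index, (A i).left j ⊗ₜ[k] ((A i).right j ⊗ₜ[k] r.right i))
      = ∑ i ∈ r.index, ∑ j ∈ (A i).index, ∑ q ∈ (B i j).index,
        ((B i j).right q • m₀) ⊗ₜ[k]
          (r.right i * ((A i).left j * antipode (R := k) ((B i j).left q))) := by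
    refine Finset.sum_congr rfl fun i _ => ?_
    rw [map_sum]
    exact Finset.sum_congr rfl fun j _ =>
      xiHat_tmul k H M m₀ ((A i).left j) ((A i).right j) (r.right i) (B i j)
  have h1R : ∑ i ∈ r.index, (xiHat k H M m₀)
        (∑ p ∈ (s i).index, r.left i ⊗ₜ[k] ((s i).left p ⊗ₜ[k] (s i).right p))
      = ∑ i ∈ r.index, ∑ p ∈ (s i).index, ∑ q ∈ (w i p).index,
        ((w i p).right q • m₀) ⊗ₜ[k]
          ((s i).right p * (r.left i * antipode (R := k) ((w i p).left q))) := by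
    refine Finset.sum_congr rfl fun i _ => ?_
    rw [map_sum]
    exact Finset.sum_congr rfl fun p _ =>
      xiHat_tmul k H M m₀ (r.left i) ((s i).left p) ((s i).right p) (w i p)
  rw [h1L, h1R] at h1
  -- Step 4 (per i coassociativity move and collapse)
  have step4 : ∀ i : r.ι, ∑ j ∈ (A i).index, ∑ q ∈ (B i j).index,
        ((B i j).right q • m₀) ⊗ₜ[k]
          (r.right i * ((A i).left j * antipode (R := k) ((B i j).left q)))
      = (r.left i • m₀) ⊗ₜ[k] r.right i := by
    intro i
    have h2 := Coalgebra.sum_tmul_tmul_eq (A i) (D i) (B i)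
    have h3 := congrArg (mk3 k H
        (fun a b c => (c • m₀) ⊗ₜ[k] (r.right i * (a * antipode (R := k) b)))
      (by intros; simp [add_mul, mul_add, TensorProduct.tmul_add])
      (by intros; simp [smul_mul_assoc, mul_smul_comm, TensorProduct.tmul_smul])
      (by intros; simp [map_add, mul_add, TensorProduct.tmul_add])
      (by intros; simp [map_smul, mul_smul_comm, TensorProduct.tmul_smul])
      (by intros; simp [TensorProduct.add_tmul, add_smul])
      (by intros; rw [smul_assoc, TensorProduct.smul_tmul'])) h2
    simp only [map_sum, mk3_tmul] at h3
    rw [← h3]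
    have h4 : ∀ j ∈ (A i).index, ∑ q ∈ (D i j).index,
          ((A i).right j • m₀) ⊗ₜ[k]
            (r.right i * ((D i j).left q * antipode (R := k) ((D i j).right q)))
        = Coalgebra.counit (R := k) ((A i).left j) • (((A i).right j • m₀) ⊗ₜ[k] r.right i) := by
      intro j _
      rw [← TensorProduct.tmul_sum, ← Finset.mul_sum,
        HopfAlgebra.sum_mul_antipode_eq_algebraMap_counit (D i j), ← Algebra.commutes, ← Algebra.smul_def,
        TensorProduct.tmul_smul]
    rw [Finset.sum_congr rfl h4]
    simp only [TensorProduct.smul_tmul', ← smul_assoc]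
    rw [← TensorProduct.sum_tmul, ← Finset.sum_smul, counit_smul k H (r.left i) (A i)]
  rw [step1]
  rw [Finset.sum_congr rfl fun i _ => step2 i]
  rw [← h1]
  exact Finset.sum_congr rfl fun i _ => step4 i
open Coalgebra HopfAlgebra in
lemma part2 (ρM : M →ₗ[k] M ⊗[k] H)
    (hρ_coassoc : (LinearMap.rTensor H ρM) ∘ₗ ρM =
      (TensorProduct.assoc k M H H).symm.toLinearMap ∘ₗ
        (LinearMap.lTensor M (Coalgebra.comul (R := k))) ∘ₗ ρM)
    (haYD : ρM ∘ₗ TensorProduct.lift (csmul k H M) =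
      (LinearMap.rTensor H (TensorProduct.lift (csmul k H M))) ∘ₗ coact k H M ρM) :
    ρM ∘ₗ sigmaM k H M ρM = (LinearMap.rTensor H (sigmaM k H M ρM)) ∘ₗ ρM := by
  classical
  apply LinearMap.ext; intro m
  obtain ⟨F, hF⟩ := TensorProduct.exists_finset (ρM m)
  have hGex : ∀ s : M × H, ∃ G : Finset (M × H), ρM s.1 = ∑ q ∈ G, q.1 ⊗ₜ[k] q.2 :=
    fun s => TensorProduct.exists_finset _
  choose G hG using hGex
  set R : (s : M × H) → Coalgebra.Repr k s.2 (H × H) := fun s => ℛ k s.2 with hRdef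
  -- the element form of coassociativity of the coaction
  have E : ∑ s ∈ F, ∑ q ∈ G s, (q.1 ⊗ₜ[k] q.2) ⊗ₜ[k] s.2
      = ∑ s ∈ F, ∑ i ∈ (R s).index, (s.1 ⊗ₜ[k] (R s).left i) ⊗ₜ[k] (R s).right i := by
    have hc := LinearMap.congr_fun hρ_coassoc m
    simp only [LinearMap.comp_apply, LinearEquiv.coe_coe] at hc
    have hL : (LinearMap.rTensor H ρM) (ρM m)
        = ∑ s ∈ F, ∑ q ∈ G s, (q.1 ⊗ₜ[k] q.2) ⊗ₜ[k] s.2 := by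
      rw [hF, map_sum]
      exact Finset.sum_congr rfl fun s _ => by
        rw [LinearMap.rTensor_tmul, hG s, TensorProduct.sum_tmul]
    have hR : (TensorProduct.assoc k M H H).symm
          ((LinearMap.lTensor M (Coalgebra.comul (R := k))) (ρM m))
        = ∑ s ∈ F, ∑ i ∈ (R s).index, (s.1 ⊗ₜ[k] (R s).left i) ⊗ₜ[k] (R s).right i := by
      rw [hF, map_sum, map_sum]
      exact Finset.sum_congr rfl fun s _ => by
        rw [LinearMap.lTensor_tmul, ← (R s).eq, TensorProduct.tmul_sum, map_sum]
        exact Finset.sum_congr rfl fun i _ => by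
          rw [TensorProduct.assoc_symm_tmul]
    rw [← hL, ← hR]; exact hc
  set Ω : (M ⊗[k] H) ⊗[k] H →ₗ[k] M ⊗[k] H :=
    (LinearMap.rTensor H (TensorProduct.lift (csmul k H M))) ∘ₗ tailCoact k H M ∘ₗ
      (TensorProduct.comm k (M ⊗[k] H) H).toLinearMap with hΩ
  set Φ : (M ⊗[k] H) ⊗[k] H →ₗ[k] M ⊗[k] H :=
    LinearMap.rTensor H ((TensorProduct.lift (csmul k H M)) ∘ₗ
      (TensorProduct.comm k M H).toLinearMap) with hΦ
  have EΩ := congrArg Ω E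
  have EΦ := congrArg Φ E
  simp only [map_sum] at EΩ EΦ
  -- the left-hand side
  have hLHS : (ρM ∘ₗ sigmaM k H M ρM) m
      = ∑ s ∈ F, ∑ q ∈ G s, Ω ((q.1 ⊗ₜ[k] q.2) ⊗ₜ[k] s.2) := by
    rw [LinearMap.comp_apply, sigmaM_eq k H M ρM m F hF, map_sum]
    refine Finset.sum_congr rfl fun s _ => ?_
    have h0 := LinearMap.congr_fun haYD (s.2 ⊗ₜ[k] s.1)
    rw [LinearMap.comp_apply, LinearMap.comp_apply, lift_csmul_tmul] at h0
    rw [h0, coact_eq_tail, LinearMap.comp_apply, LinearMap.lTensor_tmul, hG s,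
      TensorProduct.tmul_sum, map_sum, map_sum]
    exact Finset.sum_congr rfl fun q _ => by
      rw [hΩ]
      simp only [LinearMap.comp_apply, LinearEquiv.coe_coe, TensorProduct.comm_tmul]
  -- the right-hand side
  have hRHS : ((LinearMap.rTensor H (sigmaM k H M ρM)) ∘ₗ ρM) m
      = ∑ s ∈ F, ∑ q ∈ G s, Φ ((q.1 ⊗ₜ[k] q.2) ⊗ₜ[k] s.2) := by
    rw [LinearMap.comp_apply, hF, map_sum]
    refine Finset.sum_congr rfl fun s _ => ?_
    rw [LinearMap.rTensor_tmul, sigmaM_eq k H M ρM s.1 (G s) (hG s)]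
    rw [TensorProduct.sum_tmul]
    exact Finset.sum_congr rfl fun q _ => by
      rw [hΦ]
      simp only [LinearMap.rTensor_tmul, LinearMap.comp_apply, LinearEquiv.coe_coe,
        TensorProduct.comm_tmul]
      rw [lift_csmul_tmul]
  rw [hLHS, hRHS, EΩ, EΦ]
  refine Finset.sum_congr rfl fun s _ => ?_
  -- reduce both sides to `p2core`
  have hΩs : ∑ i ∈ (R s).index, Ω ((s.1 ⊗ₜ[k] (R s).left i) ⊗ₜ[k] (R s).right i)
      = ∑ i ∈ (R s).index, (LinearMap.rTensor H (TensorProduct.lift (csmul k H M)))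
          (tailCoact k H M ((R s).right i ⊗ₜ[k] (s.1 ⊗ₜ[k] (R s).left i))) := by
    refine Finset.sum_congr rfl fun i _ => ?_
    rw [hΩ]
    simp only [LinearMap.comp_apply, LinearEquiv.coe_coe, TensorProduct.comm_tmul]
  have hΦs : ∑ i ∈ (R s).index, Φ ((s.1 ⊗ₜ[k] (R s).left i) ⊗ₜ[k] (R s).right i)
      = ∑ i ∈ (R s).index, ((R s).left i • s.1) ⊗ₜ[k] (R s).right i := by
    refine Finset.sum_congr rfl fun i _ => ?_
    rw [hΦ]
    simp only [LinearMap.rTensor_tmul, LinearMap.comp_apply, LinearEquiv.coe_coe,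
      TensorProduct.comm_tmul]
    rw [lift_csmul_tmul]
  rw [hΩs, hΦs, p2core k H M s.1 s.2 (R s)]

theorem stmt17 (ρM : M →ₗ[k] M ⊗[k] H)
    (hρ_coassoc : (LinearMap.rTensor H ρM) ∘ₗ ρM =
      (TensorProduct.assoc k M H H).symm.toLinearMap ∘ₗ
        (LinearMap.lTensor M (Coalgebra.comul (R := k))) ∘ₗ ρM)
    (hρ_counit : (TensorProduct.rid k M).toLinearMap ∘ₗ
        (LinearMap.lTensor M (Coalgebra.counit (R := k))) ∘ₗ ρM = LinearMap.id)
    -- the anti-Yetter-Drinfeld compatibility: `ρ(h·m) = h⁽²⁾·m₍₀₎ ⊗ h⁽³⁾ m₍₁₎ S(h⁽¹⁾)`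
    (haYD : ρM ∘ₗ TensorProduct.lift (csmul k H M) =
      (LinearMap.rTensor H (TensorProduct.lift (csmul k H M))) ∘ₗ coact k H M ρM) :
    -- `ς` is `H`-linear
    (∀ (h : H) (m : M), sigmaM k H M ρM (h • m) = h • sigmaM k H M ρM m)
    -- `ς` is `H`-colinear
    ∧ (ρM ∘ₗ sigmaM k H M ρM = (LinearMap.rTensor H (sigmaM k H M ρM)) ∘ₗ ρM)
    -- on `H ⊗ T`, `ς(x ⊗ t) = x t₍₁₎ ⊗ t₍₀₎`
    ∧ (∀ (T : Type) [AddCommGroup T] [Module k T] (ρT : T →ₗ[k] T ⊗[k] H),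
        (LinearMap.rTensor H ρT) ∘ₗ ρT =
          (TensorProduct.assoc k T H H).symm.toLinearMap ∘ₗ
            (LinearMap.lTensor T (Coalgebra.comul (R := k))) ∘ₗ ρT →
        (TensorProduct.rid k T).toLinearMap ∘ₗ
            (LinearMap.lTensor T (Coalgebra.counit (R := k))) ∘ₗ ρT = LinearMap.id →
        actHT k H T ∘ₗ (TensorProduct.comm k (H ⊗[k] T) H).toLinearMap ∘ₗ coact k H T ρT =
          (LinearMap.rTensor T (LinearMap.mul' k H)) ∘ₗ
            (TensorProduct.assoc k H H T).symm.toLinearMap ∘ₗ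
            (LinearMap.lTensor H (TensorProduct.comm k T H).toLinearMap) ∘ₗ
            (LinearMap.lTensor H ρT)) :=
  ⟨part1 k H M ρM haYD, part2 k H M ρM hρ_coassoc haYD,
    fun T _ _ ρT _ _ => part3 k H T ρT⟩

end
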